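/- Let x ≥ 3, r ≥ 0 and n, k be integers with n = k·x + r and 3 ≤ k ≤ x − r + 1. Then the base-(2^x − 1) digit list of 2^n is [2^r·C(k,0), 2^r·C(k,1), ..., 2^r·C(k,k)]; i.e., the representation of 2^n in base 2^x − 1 is the binomial form with multiplier α = 2^r. -/
import Mathlib

/-- Binomial coefficients bound: for `k ≥ 4`, `C(k,i) ≤ 2^(k-1) - 2`. -/
lemma choose_le_aux : ∀ k, 4 ≤ k → ∀ i, Nat.choose k i ≤ 2 ^ (k - 1) - 2 := by
  intro k hk
  induction k, hk using Nat.le_induction with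
  | base =>
    intro i
    rcases Nat.lt_or_ge 4 i with h | h
    · rw [Nat.choose_eq_zero_of_lt h]; omega
    · interval_cases i <;> decide
  | succ k hk ih =>
    intro i
    cases i with
    | zero => simp; have : 2 ^ 4 ≤ 2 ^ k := Nat.pow_le_pow_right (by norm_num) hk; omega
    | succ j =>
      rw [Nat.choose_succ_succ]
      have h1 := ih j
      have h2 := ih (j + 1)
      simp only [Nat.succ_eq_add_one]
      have hpow : 2 ^ (k + 1 - 1) = 2 * 2 ^ (k - 1) := by
        rw [Nat.add_sub_cancel, ← pow_succ']
        congr 1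
        omega
      have : 2 ≤ 2 ^ (k - 1) := by
        calc 2 = 2 ^ 1 := rfl
        _ ≤ 2 ^ (k - 1) := Nat.pow_le_pow_right (by norm_num) (by omega)
      omega

lemma choose_le_aux3 (k : ℕ) (hk : 3 ≤ k) (i : ℕ) : Nat.choose k i ≤ 2 ^ (k - 1) - 1 := by
  rcases Nat.lt_or_ge k 4 with h | h
  · have hk3 : k = 3 := by omega
    subst hk3
    rcases Nat.lt_or_ge 3 i with h | h
    · rw [Nat.choose_eq_zero_of_lt h]; omega
    · interval_cases i <;> decide
  · have := choose_le_aux k h i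
    omega

/-- `ofDigits` of a mapped range is a sum. -/
lemma ofDigits_range_map (b : ℕ) (f : ℕ → ℕ) :
    ∀ n, Nat.ofDigits b ((List.range n).map f) = ∑ i ∈ Finset.range n, f i * b ^ i := by
  intro n
  induction n with
  | zero => simp [Nat.ofDigits_nil]
  | succ n ih =>
    rw [List.range_succ, List.map_append, Nat.ofDigits_append, ih, Finset.sum_range_succ]
    simp [Nat.ofDigits_singleton, mul_comm]

/-- If `n = k·x + r` with `x ≥ 3` and `3 ≤ k ≤ x - r + 1`, then the
base-`(2^x - 1)` digit list of `2^n` is `[2^r·C(k,0), ..., 2^r·C(k,k)]`,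
i.e., the binomial form with multiplier `2^r`. -/
theorem binomial_form_of_small_k' (x k r n : ℕ) (hx : 3 ≤ x) (hk : 3 ≤ k)
    (hn : n = k * x + r) (hkr : k ≤ x - r + 1) :
    Nat.digits (2 ^ x - 1) (2 ^ n)
      = (List.range (k + 1)).map (fun i => 2 ^ r * Nat.choose k i) := by
  set b := 2 ^ x - 1 with hb
  have hx8 : 8 ≤ 2 ^ x := by
    calc (8:ℕ) = 2 ^ 3 := rfl
    _ ≤ 2 ^ x := Nat.pow_le_pow_right (by norm_num) hx
  have hb1 : 1 < b := by omega
  have hrx : r + 2 ≤ x := by omega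
  have hkrx : k + r ≤ x + 1 := by omega
  -- digit bound
  have hdig : ∀ i, 2 ^ r * Nat.choose k i < b := by
    intro i
    rcases Nat.lt_or_ge (k + r) (x + 1) with h | h
    · -- k + r ≤ x : 2^r * C(k,i) ≤ 2^r * 2^(k-1) ≤ 2^(x-1) < b
      have h1 : Nat.choose k i ≤ 2 ^ (k - 1) - 1 := choose_le_aux3 k hk i
      have h2 : 2 ^ r * Nat.choose k i ≤ 2 ^ r * (2 ^ (k - 1) - 1) :=
        Nat.mul_le_mul_left _ h1
      have h3 : 2 ^ r * (2 ^ (k - 1) - 1) ≤ 2 ^ r * 2 ^ (k - 1) :=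
        Nat.mul_le_mul_left _ (Nat.sub_le _ _)
      have h4 : 2 ^ r * 2 ^ (k - 1) = 2 ^ (r + (k - 1)) := (pow_add 2 r (k-1)).symm
      have h5 : 2 ^ (r + (k - 1)) ≤ 2 ^ (x - 1) := Nat.pow_le_pow_right (by norm_num) (by omega)
      have h6 : 2 * 2 ^ (x - 1) = 2 ^ x := by
        rw [← pow_succ']
        congr 1
        omega
      omega
    · -- k + r = x + 1
      have hkx : k + r = x + 1 := by omega
      rcases Nat.eq_zero_or_pos r with hr | hr
      · -- r = 0, k = x + 1 ≥ 4
        subst hr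
        have hk4 : 4 ≤ k := by omega
        have h1 := choose_le_aux k hk4 i
        have h2 : 2 ^ (k - 1) = 2 ^ x := by congr 1; omega
        simp only [pow_zero, one_mul]
        omega
      · -- r ≥ 1: 2^r * C ≤ 2^r(2^{k-1}-1) = 2^x - 2^r ≤ 2^x - 2
        have h1 : Nat.choose k i ≤ 2 ^ (k - 1) - 1 := choose_le_aux3 k hk i
        have h2 : 2 ^ r * Nat.choose k i ≤ 2 ^ r * (2 ^ (k - 1) - 1) :=
          Nat.mul_le_mul_left _ h1
        have hpk : 1 ≤ 2 ^ (k - 1) := Nat.one_le_two_pow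
        have h3 : 2 ^ r * (2 ^ (k - 1) - 1) = 2 ^ (r + (k - 1)) - 2 ^ r := by
          rw [Nat.mul_sub, pow_add, mul_one]
        have h4 : r + (k - 1) = x := by omega
        have h5 : 2 ≤ 2 ^ r := by
          calc (2:ℕ) = 2 ^ 1 := rfl
          _ ≤ 2 ^ r := Nat.pow_le_pow_right (by norm_num) hr
        rw [h4] at h3
        omega
  -- value
  have hval : Nat.ofDigits b ((List.range (k + 1)).map (fun i => 2 ^ r * Nat.choose k i))
      = 2 ^ n := by
    rw [ofDigits_range_map]
    have hb1' : b + 1 = 2 ^ x := by omega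
    calc ∑ i ∈ Finset.range (k + 1), 2 ^ r * Nat.choose k i * b ^ i
        = 2 ^ r * ∑ i ∈ Finset.range (k + 1), b ^ i * 1 ^ (k - i) * Nat.choose k i := by
          rw [Finset.mul_sum]; apply Finset.sum_congr rfl; intro i _; ring
      _ = 2 ^ r * (b + 1) ^ k := by rw [add_pow]; norm_num
      _ = 2 ^ r * (2 ^ x) ^ k := by rw [hb1']
      _ = 2 ^ n := by rw [← pow_mul, ← pow_add, hn]; ring_nf
  rw [← hval]
  apply Nat.digits_ofDigits b hb1
  · intro l hl
    simp only [List.mem_map, List.mem_range] at hl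
    obtain ⟨i, _, rfl⟩ := hl
    exact hdig i
  · intro h
    rw [List.getLast_eq_getElem]
    simp only [List.getElem_map, List.getElem_range, List.length_map, List.length_range]
    simp [Nat.choose_self]
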